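/- arXiv:2411.04479 — 4 statements merged into one kernel-verified Lean document; each statement's English description precedes it below -/
import Mathlib

section
/- Let M be a family of star patterns giving a partition of Z_q^n into subcubes all of the same dimension n-m. Then in any fixed coordinate i, each value a ∈ Z_q occurs as the i-th entry of the same number of star patterns of the partition (i.e., the number of patterns p in the family with p_i = a is independent of a). -/
/-- The subcube of `(Z_q)^C` defined by a star pattern `p` (`none` = `*`):
all vectors agreeing with `p` on every coordinate where `p` is numerical. -/
def Subcube {q : ℕ} {C : Type} (p : C → Option (ZMod q)) : Set (C → ZMod q) :=
  {x | ∀ c : C, ∀ a : ZMod q, p c = some a → x c = a}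

/-- The number of numerical entries of a star pattern. -/
noncomputable def numCount {q : ℕ} {C : Type} (p : C → Option (ZMod q)) : ℕ :=
  Nat.card {c : C // (p c).isSome}

/-- The rows of the star matrix `M` define pairwise disjoint subcubes covering the cube. -/
def IsPartitionMatrix (q : ℕ) {R C : Type} (M : R → C → Option (ZMod q)) : Prop :=
  (∀ r r' : R, r ≠ r' → Subcube (M r) ∩ Subcube (M r') = ∅) ∧
  (∀ x : C → ZMod q, ∃ r : R, x ∈ Subcube (M r))

/-- A star matrix is A-primitive if every column has at least one numerical entry. -/
def APrimitive {q : ℕ} {R C : Type} (M : R → C → Option (ZMod q)) : Prop :=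
  ∀ c : C, ∃ r : R, (M r c).isSome

section Aux

variable {q n : ℕ}

/-- Translation of coordinate `i` by `d`. -/
def tEquiv (i : Fin n) (d : ZMod q) : (Fin n → ZMod q) ≃ (Fin n → ZMod q) where
  toFun x := Function.update x i (x i + d)
  invFun x := Function.update x i (x i - d)
  left_inv x := by
    funext c
    rcases eq_or_ne c i with rfl | h
    · simp
    · simp [Function.update_of_ne h]
  right_inv x := by
    funext c
    rcases eq_or_ne c i with rfl | h
    · simp
    · simp [Function.update_of_ne h]

lemma tEquiv_apply_self (i : Fin n) (d : ZMod q) (x : Fin n → ZMod q) :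
    tEquiv i d x i = x i + d := by simp [tEquiv]

lemma tEquiv_apply_ne (i : Fin n) (d : ZMod q) (x : Fin n → ZMod q) {c : Fin n}
    (h : c ≠ i) : tEquiv i d x c = x c := by
  simp [tEquiv, Function.update_of_ne h]

/-- The subcube of a pattern is equivalent to the functions on the starred coordinates. -/
noncomputable def subcubeEquiv (p : Fin n → Option (ZMod q)) :
    Subcube p ≃ ({c : Fin n // (p c).isNone} → ZMod q) where
  toFun x c := x.1 c.1
  invFun f :=
    ⟨fun c => (p c).getD (if h : (p c).isNone then f ⟨c, h⟩ else 0), by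
      intro c a hc
      simp [hc]⟩
  left_inv x := by
    ext c
    rcases hpc : p c with _ | a
    · simp [hpc]
    · simpa [hpc] using (x.2 c a hpc).symm
  right_inv f := by
    funext c
    have hc : p c.1 = none := Option.isNone_iff_eq_none.mp c.2
    simp [hc]

lemma card_subcube [NeZero q] (p : Fin n → Option (ZMod q)) :
    Nat.card (Subcube p) = q ^ (n - numCount p) := by
  classical
  have h1 : Nat.card (Subcube p) = q ^ Fintype.card {c : Fin n // (p c).isNone} := by
    rw [Nat.card_congr (subcubeEquiv p), Nat.card_eq_fintype_card, Fintype.card_fun,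
      ZMod.card]
  have h2 : Fintype.card {c : Fin n // (p c).isNone} = n - numCount p := by
    have e : {c : Fin n // (p c).isNone} ≃ {c : Fin n // ¬ (p c).isSome} :=
      Equiv.subtypeEquivRight (by
        intro c
        rcases hpc : p c with _ | a <;> simp)
    rw [Fintype.card_congr e, Fintype.card_subtype_compl, Fintype.card_fin]
    rw [numCount, Nat.card_eq_fintype_card]
  rw [h1, h2]

lemma natCard_sigma {ι : Type} [Fintype ι] (f : ι → Type) [∀ i, Finite (f i)] :
    Nat.card (Σ i, f i) = ∑ i, Nat.card (f i) := by
  haveI := fun i => Fintype.ofFinite (f i)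
  simp [Nat.card_eq_fintype_card]

end Aux

/-- In a partition of `Z_q^n` into `q^m` subcubes of dimension `n - m`, in any fixed
column every value `a ∈ Z_q` occurs as an entry the same number of times. -/
theorem stmt1 (q n m : ℕ) (hq : 2 ≤ q) (hmn : m ≤ n)
    (M : Fin (q ^ m) → Fin n → Option (ZMod q))
    (hpart : IsPartitionMatrix q M)
    (hrows : ∀ r, numCount (M r) = m)
    (i : Fin n) (a b : ZMod q) :
    Nat.card {r : Fin (q ^ m) // M r i = some a} =
      Nat.card {r : Fin (q ^ m) // M r i = some b} := by
  classical
  haveI : NeZero q := ⟨by omega⟩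
  rcases eq_or_ne a b with rfl | hab
  · rfl
  -- the key counting identity: for every set `T`,
  -- `Nat.card T = ∑ r, Nat.card (Subcube (M r) ∩ T)`.
  have key : ∀ T : Set (Fin n → ZMod q),
      Nat.card T = ∑ r, Nat.card ↥(Subcube (M r) ∩ T) := by
    intro T
    let f : T → Fin (q ^ m) := fun x => Classical.choose (hpart.2 x.1)
    have hf : ∀ x : T, (x : Fin n → ZMod q) ∈ Subcube (M (f x)) :=
      fun x => Classical.choose_spec (hpart.2 x.1)
    have e2 : ∀ r, {x : T // f x = r} ≃ ↥(Subcube (M r) ∩ T) := by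
      intro r
      refine ⟨fun x => ⟨x.1.1, ⟨by have h := hf x.1; rwa [x.2] at h, x.1.2⟩⟩,
        fun y => ⟨⟨y.1, y.2.2⟩, ?_⟩, fun x => rfl, fun y => rfl⟩
      by_contra h
      have hdis := hpart.1 _ _ h
      have : (y : Fin n → ZMod q) ∈ Subcube (M (f ⟨y.1, y.2.2⟩)) ∩ Subcube (M r) :=
        ⟨hf ⟨y.1, y.2.2⟩, y.2.1⟩
      rw [hdis] at this
      exact this
    calc Nat.card T = Nat.card (Σ r, {x : T // f x = r}) :=
          (Nat.card_congr (Equiv.sigmaFiberEquiv f)).symm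
      _ = ∑ r, Nat.card {x : T // f x = r} := natCard_sigma _
      _ = ∑ r, Nat.card ↥(Subcube (M r) ∩ T) := by
          refine Finset.sum_congr rfl fun r _ => Nat.card_congr (e2 r)
  -- translation invariance for the `none` rows and for the whole slices
  have hTslice : Nat.card ↥({x : Fin n → ZMod q | x i = a}) =
      Nat.card ↥({x : Fin n → ZMod q | x i = b}) := by
    refine Nat.card_congr (Equiv.subtypeEquiv (tEquiv i (b - a)) fun x => ?_)
    rw [Set.mem_setOf_eq, Set.mem_setOf_eq, tEquiv_apply_self]
    constructor
    · intro h; rw [h]; ring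
    · intro h; linear_combination h
  -- pointwise case analysis
  have point : ∀ r,
      Nat.card ↥(Subcube (M r) ∩ {x | x i = a}) + (if M r i = some b then q ^ (n - m) else 0)
      = Nat.card ↥(Subcube (M r) ∩ {x | x i = b}) +
        (if M r i = some a then q ^ (n - m) else 0) := by
    intro r
    have hcard : Nat.card (Subcube (M r)) = q ^ (n - m) := by
      rw [card_subcube, hrows r]
    rcases hc : M r i with _ | c
    · -- starred entry: translation bijection between the two intersections
      have : Nat.card ↥(Subcube (M r) ∩ {x | x i = a}) =
          Nat.card ↥(Subcube (M r) ∩ {x | x i = b}) := by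
        refine Nat.card_congr (Equiv.subtypeEquiv (tEquiv i (b - a)) fun x => ?_)
        rw [Set.mem_inter_iff, Set.mem_inter_iff, Set.mem_setOf_eq, Set.mem_setOf_eq,
          tEquiv_apply_self]
        have hsub : x ∈ Subcube (M r) ↔ tEquiv i (b - a) x ∈ Subcube (M r) := by
          constructor <;> intro hx c' a' hc'
          · have hne : c' ≠ i := by rintro rfl; rw [hc] at hc'; exact nomatch hc'
            rw [tEquiv_apply_ne _ _ _ hne]; exact hx c' a' hc'
          · have hne : c' ≠ i := by rintro rfl; rw [hc] at hc'; exact nomatch hc'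
            have := hx c' a' hc'
            rwa [tEquiv_apply_ne _ _ _ hne] at this
        have hval : x i = a ↔ x i + (b - a) = b := by
          constructor
          · intro h; rw [h]; ring
          · intro h; linear_combination h
        exact and_congr hsub hval
      rw [if_neg (by simp [hc]), if_neg (by simp [hc]), this]
    · -- numerical entry `c`
      have hfull : ∀ d : ZMod q, c = d →
          Nat.card ↥(Subcube (M r) ∩ {x | x i = d}) = q ^ (n - m) := by
        rintro d rfl
        have : Subcube (M r) ∩ {x | x i = c} = Subcube (M r) := by
          apply Set.inter_eq_left.mpr
          intro x hx
          exact hx i c hc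
        rw [this, hcard]
      have hempty : ∀ d : ZMod q, c ≠ d →
          Nat.card ↥(Subcube (M r) ∩ {x | x i = d}) = 0 := by
        intro d hd
        have : Subcube (M r) ∩ {x | x i = d} = ∅ := by
          ext x
          simp only [Set.mem_inter_iff, Set.mem_setOf_eq, Set.mem_empty_iff_false, iff_false]
          rintro ⟨hx, hxi⟩
          exact hd ((hx i c hc).symm.trans hxi)
        rw [this]
        simp
      simp only [hc, Option.some.injEq]
      by_cases hca : c = a
      · rw [hfull a hca, hempty b (by rw [hca]; exact hab)]
        simp [hca, hab]
      · by_cases hcb : c = b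
        · rw [hfull b hcb, hempty a hca]
          simp [hcb, hca, Ne.symm hab]
        · rw [hempty a hca, hempty b hcb]
          simp [hca, hcb]
  -- sum everything
  have hsum : ∑ r, Nat.card ↥(Subcube (M r) ∩ {x | x i = a}) =
      ∑ r, Nat.card ↥(Subcube (M r) ∩ {x | x i = b}) := by
    rw [← key, ← key]; exact hTslice
  have hsum2 : (∑ r, if M r i = some b then q ^ (n - m) else 0) =
      ∑ r, if M r i = some a then q ^ (n - m) else 0 := by
    have := Finset.sum_congr rfl (fun r (_ : r ∈ Finset.univ) => point r)
    simp only [Finset.sum_add_distrib] at this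
    rw [hsum] at this
    exact Nat.add_left_cancel this
  -- convert indicator sums to cardinalities
  have conv : ∀ d : ZMod q, (∑ r, if M r i = some d then q ^ (n - m) else 0) =
      Nat.card {r : Fin (q ^ m) // M r i = some d} * q ^ (n - m) := by
    intro d
    calc (∑ r, if M r i = some d then q ^ (n - m) else 0)
        = ∑ r ∈ Finset.univ.filter (fun r => M r i = some d), q ^ (n - m) :=
          (Finset.sum_filter _ _).symm
      _ = (Finset.univ.filter (fun r => M r i = some d)).card * q ^ (n - m) := by
          rw [Finset.sum_const, smul_eq_mul]
      _ = Nat.card {r : Fin (q ^ m) // M r i = some d} * q ^ (n - m) := by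
          rw [Nat.card_eq_fintype_card, Fintype.card_subtype]
  rw [conv a, conv b] at hsum2
  have hpow : 0 < q ^ (n - m) := Nat.pow_pos (lt_of_lt_of_le (by norm_num) hq)
  exact Nat.eq_of_mul_eq_mul_right hpow hsum2.symm
end

section
/- The rows of the fractal star matrix M_{q,m}, viewed as star patterns, define a partition of the hypercube Z_q^N, N = (q^m - 1)/(q - 1), into q^m pairwise disjoint subcubes of dimension N - m each, covering all of Z_q^N. -/
/-- Number of rows of the fractal matrix `M_{q,m}`. -/
def Nrows (q : ℕ) : ℕ → ℕ
  | 0 => 1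
  | m + 1 => q * Nrows q m

/-- Number of columns of the fractal matrix `M_{q,m}`. -/
def Ncols (q : ℕ) : ℕ → ℕ
  | 0 => 0
  | m + 1 => 1 + q * Ncols q m

/-- Entry of the fractal matrix `M_{q,m}` in row `r`, column `c` (as natural number
indices): `M_{q,0}` has one row and no columns; `M_{q,m+1}` consists of `q` horizontal
stripes indexed by `a ∈ Z_q`, stripe `a` having the constant value `a` in the first
column, a copy of `M_{q,m}` in the `a`-th of `q` column blocks, and all-stars elsewhere. -/
def fractalEntry (q : ℕ) : ℕ → ℕ → ℕ → Option (ZMod q)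
  | 0, _, _ => none
  | m + 1, r, c =>
    if c = 0 then some (Nat.cast (r / Nrows q m))
    else if (c - 1) / Ncols q m = r / Nrows q m then
      fractalEntry q m (r % Nrows q m) ((c - 1) % Ncols q m)
    else none

/-- The fractal star matrix `M_{q,m}`. -/
def fractalMatrix (q m : ℕ) : Fin (Nrows q m) → Fin (Ncols q m) → Option (ZMod q) :=
  fun r c => fractalEntry q m r.1 c.1

lemma Nrows_eq (q m : ℕ) : Nrows q m = q ^ m := by
  induction m with
  | zero => rfl
  | succ m ih => simp only [Nrows, ih, pow_succ]; ring

lemma Nrows_pos (q : ℕ) (hq : 1 ≤ q) (m : ℕ) : 0 < Nrows q m := by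
  rw [Nrows_eq]; exact Nat.pow_pos (by omega)

lemma Ncols_mul (q : ℕ) (hq : 1 ≤ q) (m : ℕ) : (q - 1) * Ncols q m + 1 = q ^ m := by
  obtain ⟨u, rfl⟩ : ∃ u, q = u + 1 := ⟨q - 1, by omega⟩
  induction m with
  | zero => simp [Ncols]
  | succ m ih =>
    simp only [Ncols, pow_succ, Nat.add_sub_cancel, ← ih]
    ring

lemma Ncols_div (q : ℕ) (hq : 2 ≤ q) (m : ℕ) : Ncols q m = (q ^ m - 1) / (q - 1) := by
  have h := Ncols_mul q (by omega) m
  have h2 : q ^ m - 1 = Ncols q m * (q - 1) := by rw [Nat.mul_comm]; omega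
  exact (Nat.div_eq_of_eq_mul_left (by omega) h2).symm

lemma entry_zero (q m r : ℕ) :
    fractalEntry q (m+1) r 0 = some ((r / Nrows q m : ℕ) : ZMod q) := by
  simp [fractalEntry]

lemma entry_block (q m r b c₀ : ℕ) (hc : c₀ < Ncols q m) :
    fractalEntry q (m+1) r (1 + b * Ncols q m + c₀) =
      if b = r / Nrows q m then fractalEntry q m (r % Nrows q m) c₀ else none := by
  have hC : 0 < Ncols q m := by omega
  have h1 : 1 + b * Ncols q m + c₀ ≠ 0 := by omega
  have h2 : (1 + b * Ncols q m + c₀) - 1 = c₀ + b * Ncols q m := by omega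
  simp only [fractalEntry, if_neg h1, h2,
    Nat.add_mul_div_right _ _ hC, Nat.add_mul_mod_self_right,
    Nat.div_eq_of_lt hc, Nat.mod_eq_of_lt hc, Nat.zero_add]

lemma blk_lt (q C b c₀ : ℕ) (hb : b < q) (hc : c₀ < C) :
    1 + b * C + c₀ < 1 + q * C := by
  have h : (b + 1) * C ≤ q * C := Nat.mul_le_mul_right C hb
  have : b * C + c₀ < (b + 1) * C := by
    rw [Nat.succ_mul]; omega
  omega

lemma col_decomp (q C c : ℕ) (hc0 : c ≠ 0) (hc : c < 1 + q * C) :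
    ∃ b < q, ∃ c₀ < C, c = 1 + b * C + c₀ := by
  have hC : 0 < C := by
    rcases Nat.eq_zero_or_pos C with h | h
    · subst h; omega
    · exact h
  refine ⟨(c - 1) / C, ?_, (c - 1) % C, Nat.mod_lt _ hC, ?_⟩
  · exact Nat.div_lt_of_lt_mul (by rw [Nat.mul_comm]; omega)
  · have h := Nat.div_add_mod (c - 1) C
    rw [Nat.mul_comm] at h
    omega

lemma cast_inj_of_lt (q a a' : ℕ) (hq : 1 ≤ q) (ha : a < q) (ha' : a' < q)
    (h : (a : ZMod q) = (a' : ZMod q)) : a = a' := by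
  haveI : NeZero q := ⟨by omega⟩
  rw [← ZMod.val_cast_of_lt ha, ← ZMod.val_cast_of_lt ha', h]

lemma fractal_main (q : ℕ) (hq : 2 ≤ q) : ∀ m : ℕ,
    (∀ r r' : ℕ, r < Nrows q m → r' < Nrows q m → r ≠ r' →
      ∃ c < Ncols q m, ∃ a a' : ZMod q,
        fractalEntry q m r c = some a ∧ fractalEntry q m r' c = some a' ∧ a ≠ a') ∧
    (∀ x : ℕ → ZMod q, ∃ r < Nrows q m,
      ∀ c < Ncols q m, ∀ a : ZMod q, fractalEntry q m r c = some a → x c = a) ∧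
    (∀ r < Nrows q m,
      ((Finset.range (Ncols q m)).filter
        (fun c => (fractalEntry q m r c).isSome)).card = m) := by
  haveI : NeZero q := ⟨by omega⟩
  intro m
  induction m with
  | zero =>
    refine ⟨fun r r' hr hr' hne => by simp [Nrows] at hr hr'; omega,
      fun x => ⟨0, by simp [Nrows], fun c hc => by simp [Ncols] at hc⟩,
      fun r _ => by simp [Ncols]⟩
  | succ m ih =>
    obtain ⟨ihD, ihC, ihN⟩ := ih
    set N := Nrows q m with hNdef
    set C := Ncols q m with hCdef
    have hN : 0 < N := Nrows_pos q (by omega) m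
    have hrowdiv : ∀ r : ℕ, r < Nrows q (m+1) → r / N < q := by
      intro r hr
      exact Nat.div_lt_of_lt_mul (by rw [Nat.mul_comm]; simpa [Nrows] using hr)
    refine ⟨?_, ?_, ?_⟩
    · -- disjointness
      intro r r' hr hr' hne
      by_cases hab : r / N = r' / N
      · -- same stripe: recurse
        have hss : r % N ≠ r' % N := by
          intro h
          apply hne
          have h1 := Nat.div_add_mod r N
          have h2 := Nat.div_add_mod r' N
          rw [hab] at h1
          omega
        obtain ⟨c₀, hc₀, a, a', h1, h2, hne'⟩ :=
          ihD (r % N) (r' % N) (Nat.mod_lt _ hN) (Nat.mod_lt _ hN) hss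
        refine ⟨1 + (r / N) * C + c₀, blk_lt q C _ _ (hrowdiv r hr) hc₀, a, a', ?_, ?_, hne'⟩
        · rw [entry_block q m r _ _ hc₀, if_pos rfl]; exact h1
        · rw [entry_block q m r' _ _ hc₀, if_pos hab]; exact h2
      · -- different stripes: column 0
        refine ⟨0, by simp [Ncols], ((r / N : ℕ) : ZMod q), ((r' / N : ℕ) : ZMod q),
          entry_zero q m r, entry_zero q m r', ?_⟩
        intro h
        exact hab (cast_inj_of_lt q _ _ (by omega) (hrowdiv r hr) (hrowdiv r' hr') h)
    · -- covering
      intro x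
      set a := (x 0).val with hadef
      have ha : a < q := ZMod.val_lt (x 0)
      obtain ⟨s, hs, hy⟩ := ihC (fun c₀ => x (1 + a * C + c₀))
      refine ⟨a * N + s, ?_, ?_⟩
      · have h1 : (a + 1) * N ≤ q * N := Nat.mul_le_mul_right N ha
        have h2 : a * N + s < (a + 1) * N := by rw [Nat.succ_mul]; omega
        have hNr : Nrows q (m + 1) = q * N := rfl
        rw [hNr]
        omega
      · have hdiv : (a * N + s) / N = a := by
          rw [Nat.add_comm, Nat.add_mul_div_right _ _ hN, Nat.div_eq_of_lt hs, Nat.zero_add]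
        have hmod : (a * N + s) % N = s := by
          rw [Nat.add_comm, Nat.add_mul_mod_self_right, Nat.mod_eq_of_lt hs]
        intro c hc a₀ hca
        by_cases hc0 : c = 0
        · subst hc0
          rw [entry_zero q m, hdiv] at hca
          have : ((a : ℕ) : ZMod q) = x 0 := by
            rw [hadef]; exact ZMod.natCast_rightInverse (x 0)
          rw [← this]
          exact Option.some_inj.mp hca
        · obtain ⟨b, hb, c₀, hc₀, rfl⟩ :=
            col_decomp q C _ hc0 (by simpa [Ncols] using hc)
          rw [entry_block q m _ _ _ hc₀, hdiv, hmod] at hca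
          by_cases hba : b = a
          · rw [if_pos hba] at hca
            subst hba
            exact hy c₀ hc₀ a₀ hca
          · rw [if_neg hba] at hca; exact absurd hca (by simp)
    · -- counting
      intro r hr
      set a := r / N with hadef
      have ha : a < q := hrowdiv r hr
      have key := ihN (r % N) (Nat.mod_lt _ hN)
      have hset :
          (Finset.range (Ncols q (m+1))).filter
              (fun c => (fractalEntry q (m+1) r c).isSome) =
            insert 0 (((Finset.range C).filter
              (fun c => (fractalEntry q m (r % N) c).isSome)).image
                (fun c₀ => 1 + a * C + c₀)) := by
        ext c
        simp only [Finset.mem_filter, Finset.mem_range, Finset.mem_insert,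
          Finset.mem_image]
        constructor
        · rintro ⟨hc, hsome⟩
          by_cases hc0 : c = 0
          · exact Or.inl hc0
          · right
            obtain ⟨b, hb, c₀, hc₀, rfl⟩ :=
              col_decomp q C _ hc0 (by simpa [Ncols] using hc)
            rw [entry_block q m _ _ _ hc₀] at hsome
            by_cases hba : b = a
            · rw [if_pos (hba.trans hadef)] at hsome
              exact ⟨c₀, ⟨hc₀, hsome⟩, by rw [hba]⟩
            · rw [if_neg (fun h => hba (h.trans hadef.symm))] at hsome
              simp at hsome
        · rintro (rfl | ⟨c₀, ⟨hc₀, hsome⟩, rfl⟩)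
          · exact ⟨by simp [Ncols], by rw [entry_zero]; rfl⟩
          · refine ⟨by simpa [Ncols] using blk_lt q C a c₀ ha hc₀, ?_⟩
            rw [entry_block q m _ _ _ hc₀, if_pos hadef]
            exact hsome
      rw [hset, Finset.card_insert_of_notMem, Finset.card_image_of_injective _
        (fun x y h => by omega), key]
      simp only [Finset.mem_image, Finset.mem_filter, Finset.mem_range, not_exists]
      intro c₀ _
      omega

lemma card_subtype_fin (C : ℕ) (P : ℕ → Prop) [DecidablePred P] :
    Nat.card {c : Fin C // P c.1} = ((Finset.range C).filter P).card := by
  rw [Nat.card_eq_fintype_card, Fintype.card_subtype,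
    ← Finset.card_image_of_injective (Finset.univ.filter fun c : Fin C => P c.1)
      Fin.val_injective]
  congr 1
  ext n
  simp only [Finset.mem_image, Finset.mem_filter, Finset.mem_univ, true_and,
    Finset.mem_range]
  constructor
  · rintro ⟨c, hc, rfl⟩; exact ⟨c.2, hc⟩
  · rintro ⟨hn, hp⟩; exact ⟨⟨n, hn⟩, hp, rfl⟩


/-- The rows of `M_{q,m}` define a partition of `Z_q^N`, `N = (q^m-1)/(q-1)`, into `q^m`
pairwise disjoint covering subcubes of dimension `N - m` each. -/
theorem stmt5 (q m : ℕ) (hq : 2 ≤ q) :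
    Nrows q m = q ^ m ∧
    Ncols q m = (q ^ m - 1) / (q - 1) ∧
    IsPartitionMatrix q (fractalMatrix q m) ∧
    (∀ r : Fin (Nrows q m),
      Nat.card {c : Fin (Ncols q m) // fractalMatrix q m r c = none} = Ncols q m - m) := by
  obtain ⟨hD, hC, hN⟩ := fractal_main q hq m
  refine ⟨Nrows_eq q m, Ncols_div q hq m, ⟨?_, ?_⟩, ?_⟩
  · intro r r' hrr'
    obtain ⟨c, hc, a, a', h1, h2, hne⟩ :=
      hD r.1 r'.1 r.2 r'.2 (fun h => hrr' (Fin.ext h))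
    ext x
    simp only [Set.mem_inter_iff, Set.mem_empty_iff_false, iff_false, not_and]
    intro hx1 hx2
    have e1 := hx1 ⟨c, hc⟩ a h1
    have e2 := hx2 ⟨c, hc⟩ a' h2
    exact hne (e1 ▸ e2 ▸ rfl)
  · intro x
    obtain ⟨r, hr, h⟩ := hC (fun c => if hc : c < Ncols q m then x ⟨c, hc⟩ else 0)
    refine ⟨⟨r, hr⟩, fun c a hca => ?_⟩
    have := h c.1 c.2 a hca
    simpa [c.2] using this
  · intro r
    have key := hN r.1 r.2
    show Nat.card {c : Fin (Ncols q m) // fractalEntry q m r.1 c.1 = none} = Ncols q m - m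
    rw [card_subtype_fin (Ncols q m) (fun c => fractalEntry q m r.1 c = none)]
    have hsum := Finset.card_filter_add_card_filter_not
      (s := Finset.range (Ncols q m))
      (p := fun c => (fractalEntry q m r.1 c).isSome)
    have heq : (Finset.range (Ncols q m)).filter
        (fun c => ¬ (fractalEntry q m r.1 c).isSome) =
        (Finset.range (Ncols q m)).filter (fun c => fractalEntry q m r.1 c = none) := by
      apply Finset.filter_congr
      intro c _
      simp [Option.not_isSome_iff_eq_none]
    rw [heq, Finset.card_range, key] at hsum
    omega
end

section
/- Let M be a star matrix of a partition of Z_q^n into subcubes of the same dimension, and suppose M contains a transfractal submatrix T. Then any two rows of M passing through T agree in every column outside T (all entries, numerical or star, coincide outside T). -/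
/-- A transfractal of the star matrix `M`: a submatrix (given by the injections `ρ` on rows
and `γ` on columns) which, up to these identifications, equals the fractal matrix `M_{q,l}`,
and such that every column of `M` through the submatrix has only stars outside its rows. -/
structure Transfractal (q : ℕ) {R : Type} {n : ℕ} (M : R → Fin n → Option (ZMod q))
    (l : ℕ) where
  ρ : Fin (Nrows q l) ↪ R
  γ : Fin (Ncols q l) ↪ Fin n
  eq_fractal : ∀ i j, M (ρ i) (γ j) = fractalMatrix q l i j
  stars_outside : ∀ j : Fin (Ncols q l), ∀ r : R, (∀ i, ρ i ≠ r) → M r (γ j) = none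

theorem nrows_pos (q : ℕ) (hq : 0 < q) : ∀ l, 0 < Nrows q l
  | 0 => Nat.one_pos
  | l + 1 => Nat.mul_pos hq (nrows_pos q hq l)

theorem fractal_inj (q : ℕ) (hq : 2 ≤ q) :
    ∀ l r r', r < Nrows q l → r' < Nrows q l →
      ∀ z : ℕ → ZMod q,
      (∀ c a, c < Ncols q l → fractalEntry q l r c = some a → z c = a) →
      (∀ c a, c < Ncols q l → fractalEntry q l r' c = some a → z c = a) → r = r' := by
  haveI : NeZero q := ⟨by omega⟩
  intro l
  induction l with
  | zero =>
    intro r r' hr hr' z _ _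
    simp only [Nrows] at hr hr'
    omega
  | succ l ih =>
    intro r r' hr hr' z h1 h2
    have hN : 0 < Nrows q l := nrows_pos q (by omega) l
    have hrN : r < q * Nrows q l := by rw [Nrows] at hr; exact hr
    have hrN' : r' < q * Nrows q l := by rw [Nrows] at hr'; exact hr'
    have hrq : r / Nrows q l < q := (Nat.div_lt_iff_lt_mul hN).2 hrN
    have hrq' : r' / Nrows q l < q := (Nat.div_lt_iff_lt_mul hN).2 hrN'
    have hCpos : 0 < Ncols q (l + 1) := by rw [Ncols]; omega
    have e0 : z 0 = ((r / Nrows q l : ℕ) : ZMod q) :=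
      h1 0 _ hCpos (by simp [fractalEntry])
    have e0' : z 0 = ((r' / Nrows q l : ℕ) : ZMod q) :=
      h2 0 _ hCpos (by simp [fractalEntry])
    have hdiv : r / Nrows q l = r' / Nrows q l := by
      have h := e0.symm.trans e0'
      have h2 := congrArg ZMod.val h
      rwa [ZMod.val_cast_of_lt hrq, ZMod.val_cast_of_lt hrq'] at h2
    have key : ∀ (s : ℕ), s < q * Nrows q l → s / Nrows q l = r / Nrows q l →
        (∀ c a, c < Ncols q (l + 1) → fractalEntry q (l + 1) s c = some a → z c = a) →
        (∀ cc a, cc < Ncols q l →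
          fractalEntry q l (s % Nrows q l) cc = some a →
          z (1 + Ncols q l * (r / Nrows q l) + cc) = a) := by
      intro s hs hsd hh cc a hcc he
      have hCo : 0 < Ncols q l := by omega
      refine hh (1 + Ncols q l * (r / Nrows q l) + cc) a ?_ ?_
      · rw [Ncols]
        have h1 : Ncols q l * (r / Nrows q l) + cc < Ncols q l * (r / Nrows q l + 1) := by
          rw [Nat.mul_succ]; omega
        have h2 : Ncols q l * (r / Nrows q l + 1) ≤ Ncols q l * q :=
          Nat.mul_le_mul_left _ (by omega)
        rw [Nat.mul_comm q (Ncols q l)]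
        omega
      · have hsub : 1 + Ncols q l * (r / Nrows q l) + cc - 1
            = Ncols q l * (r / Nrows q l) + cc := by omega
        rw [fractalEntry]
        rw [if_neg (by omega), hsub, Nat.mul_add_div hCo, Nat.div_eq_of_lt hcc,
          Nat.add_zero, if_pos hsd.symm, Nat.mul_add_mod, Nat.mod_eq_of_lt hcc]
        exact he
    have hmod : r % Nrows q l = r' % Nrows q l :=
      ih (r % Nrows q l) (r' % Nrows q l) (Nat.mod_lt _ hN) (Nat.mod_lt _ hN)
        (fun cc => z (1 + Ncols q l * (r / Nrows q l) + cc))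
        (fun cc a hcc he => key r hrN rfl h1 cc a hcc he)
        (fun cc a hcc he => key r' hrN' hdiv.symm h2 cc a hcc he)
    calc r = Nrows q l * (r / Nrows q l) + r % Nrows q l := (Nat.div_add_mod r _).symm
      _ = Nrows q l * (r' / Nrows q l) + r' % Nrows q l := by rw [hdiv, hmod]
      _ = r' := Nat.div_add_mod r' _

/-- If the star matrix `M` of a partition of `Z_q^n` into subcubes of the same dimension
contains a transfractal `T`, then all rows of `M` passing through `T` coincide in every
column outside `T`. -/
theorem stmt11 (q n m l : ℕ) (hq : 2 ≤ q)
    (M : Fin (q ^ m) → Fin n → Option (ZMod q))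
    (hpart : IsPartitionMatrix q M)
    (hrows : ∀ r, numCount (M r) = m)
    (T : Transfractal q M l)
    (i i' : Fin (Nrows q l)) (c : Fin n) (hc : ∀ j, T.γ j ≠ c) :
    M (T.ρ i) c = M (T.ρ i') c := by
  classical
  haveI : NeZero q := ⟨by omega⟩
  haveI : Fact (1 < q) := ⟨by omega⟩
  -- The "outside-T" constraint set of a transfractal row
  set O : Fin (Nrows q l) → Set (Fin n → ZMod q) :=
    fun i₀ => {y | ∀ c₀ : Fin n, (∀ j, T.γ j ≠ c₀) → ∀ a, M (T.ρ i₀) c₀ = some a → y c₀ = a}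
    with hO
  have key : ∀ i₁ i₂ : Fin (Nrows q l), O i₁ ⊆ O i₂ := by
    intro i₁ i₂ y hy
    -- x' follows the fractal row i₂ on T's columns, y elsewhere
    set x' : Fin n → ZMod q := fun c₀ =>
      if h : ∃ j, T.γ j = c₀ then (M (T.ρ i₂) c₀).getD 0 else y c₀ with hx'
    obtain ⟨r, hr⟩ := hpart.2 x'
    by_cases hrT : ∃ i'', T.ρ i'' = r
    · obtain ⟨i'', rfl⟩ := hrT
      have hi : i'' = i₂ := by
        apply Fin.ext
        refine fractal_inj q hq l i''.1 i₂.1 i''.2 i₂.2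
          (fun k => if h : k < Ncols q l then x' (T.γ ⟨k, h⟩) else 0) ?_ ?_
        · intro cc a hcc he
          simp only [dif_pos hcc]
          exact hr (T.γ ⟨cc, hcc⟩) a (by rw [T.eq_fractal i'' ⟨cc, hcc⟩]; exact he)
        · intro cc a hcc he
          simp only [dif_pos hcc]
          have hM : M (T.ρ i₂) (T.γ ⟨cc, hcc⟩) = some a := by
            rw [T.eq_fractal i₂ ⟨cc, hcc⟩]; exact he
          have hxg : x' (T.γ ⟨cc, hcc⟩) = (M (T.ρ i₂) (T.γ ⟨cc, hcc⟩)).getD 0 := by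
            rw [hx']; exact dif_pos ⟨⟨cc, hcc⟩, rfl⟩
          rw [hxg, hM]; rfl
      subst hi
      intro c₀ hc₀ a ha
      have h1 := hr c₀ a ha
      have hxx : x' c₀ = y c₀ := by
        rw [hx']; exact dif_neg (fun ⟨j, hj⟩ => hc₀ j hj)
      rw [← hxx]; exact h1
    · exfalso
      push_neg at hrT
      set x : Fin n → ZMod q := fun c₀ => (M (T.ρ i₁) c₀).getD (y c₀) with hx
      have hx1 : x ∈ Subcube (M (T.ρ i₁)) := by
        intro c₀ a ha; rw [hx]; simp [ha]
      have hx2 : x ∈ Subcube (M r) := by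
        intro c₀ a ha
        have hcT : ∀ j, T.γ j ≠ c₀ := by
          intro j hj
          have hnone := T.stars_outside j r (fun i₃ h => hrT i₃ h)
          rw [hj] at hnone
          rw [hnone] at ha
          cases ha
        have hyc : x' c₀ = a := hr c₀ a ha
        have hxy : x' c₀ = y c₀ := by
          rw [hx']; exact dif_neg (fun ⟨j, hj⟩ => hcT j hj)
        have hMi : x c₀ = y c₀ := by
          rw [hx]
          cases hM : M (T.ρ i₁) c₀ with
          | none => simp [hM]
          | some b => have hb := hy c₀ hcT b hM; simp [hM, hb]
        rw [hMi, ← hxy, hyc]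
      have hne : T.ρ i₁ ≠ r := fun h => hrT i₁ h
      have hdisj := hpart.1 _ _ hne
      exact absurd hdisj (by
        rw [Set.eq_empty_iff_forall_notMem]
        push_neg
        exact ⟨x, hx1, hx2⟩)
  have hsub := key i i'
  have hsub' := key i' i
  -- canonical point in O i
  have mkO : ∀ i₀ : Fin (Nrows q l),
      (fun c₀ => (M (T.ρ i₀) c₀).getD 0) ∈ O i₀ := by
    intro i₀ c₀ _ a ha; simp [ha]
  -- if a row has `none` at c and the other `some`, contradiction
  have hnone_case : ∀ i₁ i₂ : Fin (Nrows q l), ∀ a : ZMod q,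
      M (T.ρ i₁) c = none → M (T.ρ i₂) c = some a → False := by
    intro i₁ i₂ a h1 h2
    set y0 : Fin n → ZMod q := fun c₀ => (M (T.ρ i₁) c₀).getD 0 with hy0
    have hy0O : y0 ∈ O i₁ := mkO i₁
    have e0 : y0 c = a := key i₁ i₂ hy0O c hc a h2
    set y1 : Fin n → ZMod q := Function.update y0 c (y0 c + 1) with hy1
    have hy1O : y1 ∈ O i₁ := by
      intro c₀ hc₀ b hb
      rcases eq_or_ne c₀ c with rfl | hne
      · rw [h1] at hb; cases hb
      · rw [hy1, Function.update_of_ne hne]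
        exact hy0O c₀ hc₀ b hb
    have e1 : y1 c = a := key i₁ i₂ hy1O c hc a h2
    rw [hy1, Function.update_self, e0] at e1
    exact one_ne_zero (by linear_combination e1)
  cases h1 : M (T.ρ i) c with
  | none =>
    cases h2 : M (T.ρ i') c with
    | none => rfl
    | some a => exact absurd (hnone_case i i' a h1 h2) (fun h => h)
  | some a =>
    cases h2 : M (T.ρ i') c with
    | none => exact absurd (hnone_case i' i a h2 h1) (fun h => h)
    | some b =>
      set y0 : Fin n → ZMod q := fun c₀ => (M (T.ρ i) c₀).getD 0 with hy0
      have e0 : y0 c = b := hsub (mkO i) c hc b h2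
      have e1 : y0 c = a := by rw [hy0]; simp [h1]
      rw [← e0, e1]
end

section
/- For fixed q ≥ 2 and m ≥ 0, the maximal n for which there exists an A-primitive partition of Z_q^n into q^m subcubes of dimension n-m is N = (q^m - 1)/(q - 1): such a partition exists for n = N, and no such partition exists for n > N. -/
set_option linter.unusedSectionVars false

namespace Stmt17Aux


open Finset

section Upper

variable {q n : ℕ} [NeZero q]

/-- indicator factor for coordinate `c`. -/
def chi (p : Fin n → Option (ZMod q)) (c : Fin n) (b : ZMod q) : ℚ :=
  match p c with
  | some a => if b = a then 1 else 0
  | none => 1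

/-- weight of a coordinate: `1` if fixed, `q` if free. -/
def wgt (p : Fin n → Option (ZMod q)) (c : Fin n) : ℚ :=
  match p c with
  | some _ => 1
  | none => (q : ℚ)

def ind (p : Fin n → Option (ZMod q)) (x : Fin n → ZMod q) : ℚ :=
  ∏ j, chi p j (x j)

def Vol (p : Fin n → Option (ZMod q)) : ℚ := ∏ j, wgt p j

lemma sum_chi (p : Fin n → Option (ZMod q)) (c : Fin n) :
    ∑ b, chi p c b = wgt p c := by
  unfold chi wgt
  cases h : p c with
  | some a => simp
  | none => simp [ZMod.card]

lemma PROD (Φ : Fin n → ZMod q → ℚ) :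
    ∑ x : Fin n → ZMod q, ∏ j, Φ j (x j) = ∏ j, ∑ b, Φ j b := by
  rw [Finset.prod_univ_sum]
  rw [Fintype.piFinset_univ]

lemma sum_ind (p : Fin n → Option (ZMod q)) :
    ∑ x : Fin n → ZMod q, ind p x = Vol p := by
  unfold ind Vol
  rw [PROD]
  exact Finset.prod_congr rfl fun j _ => sum_chi p j

lemma prod_if_eq (A : ℚ) (g : Fin n → ℚ) (c : Fin n) :
    ∏ j, (if j = c then A else g j) = A * ∏ j ∈ univ.erase c, g j := by
  rw [← Finset.mul_prod_erase univ _ (Finset.mem_univ c)]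
  simp only [if_pos rfl]
  congr 1
  exact Finset.prod_congr rfl fun j hj => if_neg (Finset.ne_of_mem_erase hj)

lemma ONE (p : Fin n → Option (ZMod q)) (φ : ZMod q → ℚ) (c : Fin n) :
    ∑ x : Fin n → ZMod q, ind p x * φ (x c)
      = (∑ b, chi p c b * φ b) * ∏ j ∈ univ.erase c, wgt p j := by
  have h1 : ∀ x : Fin n → ZMod q, ind p x * φ (x c)
      = ∏ j, (chi p j (x j) * (if j = c then φ (x j) else 1)) := by
    intro x
    rw [Finset.prod_mul_distrib]
    unfold ind
    congr 1
    have := prod_if_eq (φ (x c)) (fun _ => (1:ℚ)) c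
    rw [show (∏ j, if j = c then φ (x j) else (1:ℚ))
        = ∏ j, (if j = c then φ (x c) else (1:ℚ)) from
      Finset.prod_congr rfl fun j _ => by split <;> simp_all]
    rw [prod_if_eq]
    simp
  simp only [h1]
  rw [PROD (fun j b => chi p j b * (if j = c then φ b else 1))]
  have h2 : ∀ j : Fin n, (∑ b, chi p j b * (if j = c then φ b else 1))
      = if j = c then (∑ b, chi p c b * φ b) else wgt p j := by
    intro j
    split
    · next h => subst h; simp
    · simp [sum_chi]
  rw [Finset.prod_congr rfl fun j _ => h2 j, prod_if_eq]

end Upper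

section Upper2
variable {q n : ℕ} [NeZero q]

lemma prod_if_eq2 (A B : ℚ) (g : Fin n → ℚ) (c c' : Fin n) (h : c' ≠ c) :
    ∏ j, (if j = c then A else if j = c' then B else g j)
      = A * (B * ∏ j ∈ (univ.erase c).erase c', g j) := by
  rw [← Finset.mul_prod_erase univ _ (Finset.mem_univ c)]
  simp only [if_pos rfl]
  congr 1
  rw [← Finset.mul_prod_erase (univ.erase c) _
      (Finset.mem_erase.2 ⟨h, Finset.mem_univ c'⟩)]
  rw [if_neg h, if_pos rfl]
  congr 1
  refine Finset.prod_congr rfl fun j hj => ?_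
  have hj' := Finset.mem_erase.1 hj
  have hj'' := Finset.mem_erase.1 hj'.2
  rw [if_neg hj''.1, if_neg hj'.1]

lemma TWO (p : Fin n → Option (ZMod q)) (φ ψ : ZMod q → ℚ) (c c' : Fin n) (hcc : c ≠ c') :
    ∑ x : Fin n → ZMod q, ind p x * (φ (x c) * ψ (x c'))
      = (∑ b, chi p c b * φ b) *
        ((∑ b, chi p c' b * ψ b) * ∏ j ∈ (univ.erase c).erase c', wgt p j) := by
  have h1 : ∀ x : Fin n → ZMod q, ind p x * (φ (x c) * ψ (x c'))
      = ∏ j, (chi p j (x j) * ((if j = c then φ (x j) else 1) *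
          (if j = c' then ψ (x j) else 1))) := by
    intro x
    rw [Finset.prod_mul_distrib, Finset.prod_mul_distrib]
    unfold ind
    congr 1
    congr 1
    · rw [show (∏ j, if j = c then φ (x j) else (1:ℚ))
          = ∏ j, (if j = c then φ (x c) else (1:ℚ)) from
        Finset.prod_congr rfl fun j _ => by split <;> simp_all]
      rw [prod_if_eq]; simp
    · rw [show (∏ j, if j = c' then ψ (x j) else (1:ℚ))
          = ∏ j, (if j = c' then ψ (x c') else (1:ℚ)) from
        Finset.prod_congr rfl fun j _ => by split <;> simp_all]
      rw [prod_if_eq]; simp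
  simp only [h1]
  rw [PROD (fun j b => chi p j b * ((if j = c then φ b else 1) * (if j = c' then ψ b else 1)))]
  have h2 : ∀ j : Fin n, (∑ b, chi p j b * ((if j = c then φ b else 1) * (if j = c' then ψ b else 1)))
      = if j = c then (∑ b, chi p c b * φ b)
        else if j = c' then (∑ b, chi p c' b * ψ b) else wgt p j := by
    intro j
    rcases eq_or_ne j c with rfl | hc
    · rw [if_pos rfl]
      refine Finset.sum_congr rfl fun b _ => ?_
      rw [if_pos rfl, if_neg hcc]
      ring
    · rw [if_neg hc]
      rcases eq_or_ne j c' with rfl | hc'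
      · rw [if_pos rfl]
        refine Finset.sum_congr rfl fun b _ => ?_
        rw [if_neg hc, if_pos rfl]; ring
      · rw [if_neg hc']
        simp only [if_neg hc, if_neg hc', mul_one]
        exact sum_chi p j
  rw [Finset.prod_congr rfl fun j _ => h2 j]
  exact prod_if_eq2 _ _ _ c c' (Ne.symm hcc)

end Upper2

section Upper3
variable {q n : ℕ} [NeZero q]

variable (F : Fin n → ZMod q → ℚ)

def ev (p : Fin n → Option (ZMod q)) (c : Fin n) : ℚ := ∑ b, chi p c b * F c b
def dv (p : Fin n → Option (ZMod q)) (c : Fin n) : ℚ := ∑ b, chi p c b * (F c b)^2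
def sg (c : Fin n) : ℚ := ∑ b, (F c b)^2
def Etot (p : Fin n → Option (ZMod q)) : ℚ := ∑ c, ev F p c

variable {F}

lemma ev_some {p : Fin n → Option (ZMod q)} {c : Fin n} {a : ZMod q} (h : p c = some a) :
    ev F p c = F c a := by
  unfold ev chi; rw [h]; simp [Finset.sum_ite_eq' univ a (fun b => F c b)]

lemma ev_none (hF : ∀ c, ∑ b, F c b = 0) {p : Fin n → Option (ZMod q)} {c : Fin n}
    (h : p c = none) : ev F p c = 0 := by
  unfold ev chi; rw [h]; simpa using hF c

lemma dv_some {p : Fin n → Option (ZMod q)} {c : Fin n} {a : ZMod q} (h : p c = some a) :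
    dv F p c = (F c a)^2 := by
  unfold dv chi; rw [h]; simp [Finset.sum_ite_eq' univ a (fun b => (F c b)^2)]

lemma dv_none {p : Fin n → Option (ZMod q)} {c : Fin n} (h : p c = none) :
    dv F p c = sg F c := by
  unfold dv chi sg; rw [h]; simp

lemma wgt_some {p : Fin n → Option (ZMod q)} {c : Fin n} {a : ZMod q} (h : p c = some a) :
    wgt p c = 1 := by unfold wgt; rw [h]

lemma wgt_none {p : Fin n → Option (ZMod q)} {c : Fin n} (h : p c = none) :
    wgt p c = (q : ℚ) := by unfold wgt; rw [h]

/-- for fixed coordinates, the erased product equals the full volume;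
for free ones `ev` vanishes, so this holds unconditionally as a product identity. -/
lemma ev_mul_prod (hF : ∀ c, ∑ b, F c b = 0) (p : Fin n → Option (ZMod q)) (c : Fin n) :
    ev F p c * ∏ j ∈ univ.erase c, wgt p j = ev F p c * Vol p := by
  cases h : p c with
  | none => rw [ev_none hF h]; ring
  | some a =>
    congr 1
    unfold Vol
    rw [← Finset.mul_prod_erase univ _ (Finset.mem_univ c), wgt_some h, one_mul]

lemma ev_mul_prod2 (hF : ∀ c, ∑ b, F c b = 0) (p : Fin n → Option (ZMod q)) (c c' : Fin n)
    (h : c' ∈ univ.erase c) :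
    ev F p c' * ∏ j ∈ (univ.erase c).erase c', wgt p j
      = ev F p c' * ∏ j ∈ univ.erase c, wgt p j := by
  cases hc : p c' with
  | none => rw [ev_none hF hc]; ring
  | some a =>
    congr 1
    rw [← Finset.mul_prod_erase (univ.erase c) _ h, wgt_some hc, one_mul]

lemma qt (hF : ∀ c, ∑ b, F c b = 0) (p : Fin n → Option (ZMod q)) (c : Fin n) :
    (q : ℚ) * ((dv F p c - (ev F p c)^2) * ∏ j ∈ univ.erase c, wgt p j)
      = if p c = none then sg F c * Vol p else 0 := by
  cases h : p c with
  | none =>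
    rw [if_pos rfl, ev_none hF h, dv_none h]
    unfold Vol
    rw [← Finset.mul_prod_erase univ _ (Finset.mem_univ c), wgt_none h]
    ring
  | some a =>
    rw [if_neg (by simp [h]), ev_some h, dv_some h]
    ring

end Upper3

section Upper4
variable {q n : ℕ} [NeZero q] {F : Fin n → ZMod q → ℚ}

lemma key1 (hF : ∀ c, ∑ b, F c b = 0) (p : Fin n → Option (ZMod q)) :
    ∑ x : Fin n → ZMod q, ind p x * (∑ c, F c (x c)) = Etot F p * Vol p := by
  have e1 : ∀ x : Fin n → ZMod q, ind p x * (∑ c, F c (x c)) = ∑ c, ind p x * F c (x c) :=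
    fun x => Finset.mul_sum _ _ _
  simp only [e1]
  rw [Finset.sum_comm]
  calc ∑ c, ∑ x : Fin n → ZMod q, ind p x * F c (x c)
      = ∑ c, ev F p c * ∏ j ∈ univ.erase c, wgt p j :=
        Finset.sum_congr rfl (fun c _ => ONE p (F c) c)
    _ = ∑ c, ev F p c * Vol p := Finset.sum_congr rfl (fun c _ => ev_mul_prod hF p c)
    _ = Etot F p * Vol p := by rw [← Finset.sum_mul]; rfl

lemma SUMH (hF : ∀ c, ∑ b, F c b = 0) (p : Fin n → Option (ZMod q)) (c0 : ℚ) :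
    ∑ x : Fin n → ZMod q, ind p x * (c0 + ∑ c, F c (x c)) = Vol p * (c0 + Etot F p) := by
  have e1 : ∀ x : Fin n → ZMod q, ind p x * (c0 + ∑ c, F c (x c))
      = c0 * ind p x + ind p x * (∑ c, F c (x c)) := fun x => by ring
  simp only [e1]
  rw [Finset.sum_add_distrib, ← Finset.mul_sum, sum_ind, key1 hF]
  ring

lemma key2 (hF : ∀ c, ∑ b, F c b = 0) (p : Fin n → Option (ZMod q)) :
    ∑ x : Fin n → ZMod q, ind p x * ((∑ c, F c (x c)) * (∑ c, F c (x c)))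
      = (∑ c, ((dv F p c - (ev F p c)^2) * ∏ j ∈ univ.erase c, wgt p j))
        + Etot F p ^ 2 * Vol p := by
  have e1 : ∀ x : Fin n → ZMod q, ind p x * ((∑ c, F c (x c)) * (∑ c, F c (x c)))
      = ∑ c, ∑ c', ind p x * (F c (x c) * F c' (x c')) := by
    intro x
    rw [Finset.sum_mul_sum, Finset.mul_sum]
    exact Finset.sum_congr rfl fun c _ => Finset.mul_sum _ _ _
  simp only [e1]
  rw [Finset.sum_comm]
  have e2 : ∀ c, ∑ x : Fin n → ZMod q, ∑ c', ind p x * (F c (x c) * F c' (x c'))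
      = ∑ c', ∑ x : Fin n → ZMod q, ind p x * (F c (x c) * F c' (x c')) :=
    fun c => Finset.sum_comm
  simp only [e2]
  have e3 : ∀ c, ∑ c', ∑ x : Fin n → ZMod q, ind p x * (F c (x c) * F c' (x c'))
      = (dv F p c - (ev F p c)^2) * (∏ j ∈ univ.erase c, wgt p j)
        + ev F p c * Etot F p * Vol p := by
    intro c
    rw [← Finset.add_sum_erase univ _ (Finset.mem_univ c)]
    have diag : ∑ x : Fin n → ZMod q, ind p x * (F c (x c) * F c (x c))
        = dv F p c * ∏ j ∈ univ.erase c, wgt p j := by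
      rw [ONE p (fun b => F c b * F c b) c]
      congr 1
      exact Finset.sum_congr rfl fun b _ => by ring
    have offd : ∀ c' ∈ univ.erase c,
        ∑ x : Fin n → ZMod q, ind p x * (F c (x c) * F c' (x c'))
          = ev F p c * ev F p c' * ∏ j ∈ univ.erase c, wgt p j := by
      intro c' hc'
      rw [TWO p (F c) (F c') c c' (fun h => (Finset.ne_of_mem_erase hc') h.symm)]
      show ev F p c * (ev F p c' * ∏ j ∈ (univ.erase c).erase c', wgt p j)
        = ev F p c * ev F p c' * ∏ j ∈ univ.erase c, wgt p j
      rw [ev_mul_prod2 hF p c c' hc']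
      ring
    rw [diag, Finset.sum_congr rfl offd, ← Finset.sum_mul, ← Finset.mul_sum,
        Finset.sum_erase_eq_sub (Finset.mem_univ c)]
    have : (∑ c', ev F p c') = Etot F p := rfl
    rw [this]
    have hev := ev_mul_prod hF p c
    linear_combination (Etot F p) * hev
  rw [Finset.sum_congr rfl fun c _ => e3 c]
  rw [Finset.sum_add_distrib]
  congr 1
  have e4 : ∀ c : Fin n, ev F p c * Etot F p * Vol p = ev F p c * (Etot F p * Vol p) :=
    fun c => by ring
  rw [Finset.sum_congr rfl fun c _ => e4 c, ← Finset.sum_mul]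
  have : (∑ c, ev F p c) = Etot F p := rfl
  rw [this]
  ring

lemma SUMH2 (hF : ∀ c, ∑ b, F c b = 0) (p : Fin n → Option (ZMod q)) (c0 : ℚ) :
    (q : ℚ) * ∑ x : Fin n → ZMod q, ind p x * (c0 + ∑ c, F c (x c))^2
      = (q : ℚ) * (Vol p * (c0 + Etot F p)^2)
        + ∑ c, (if p c = none then sg F c * Vol p else 0) := by
  have e1 : ∀ x : Fin n → ZMod q, ind p x * (c0 + ∑ c, F c (x c))^2
      = (c0^2) * ind p x + (2*c0) * (ind p x * (∑ c, F c (x c)))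
        + ind p x * ((∑ c, F c (x c)) * (∑ c, F c (x c))) := fun x => by ring
  simp only [e1]
  rw [Finset.sum_add_distrib, Finset.sum_add_distrib, ← Finset.mul_sum, ← Finset.mul_sum,
      sum_ind, key1 hF, key2 hF]
  have e2 : ∑ c, (if p c = none then sg F c * Vol p else 0)
      = (q:ℚ) * ∑ c, ((dv F p c - (ev F p c)^2) * ∏ j ∈ univ.erase c, wgt p j) := by
    rw [Finset.mul_sum]
    exact Finset.sum_congr rfl fun c _ => (qt hF p c).symm
  rw [e2]
  ring

end Upper4

section Upper5
variable {q n K : ℕ} [NeZero q]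

open Classical in
lemma ind_eq (p : Fin n → Option (ZMod q)) (x : Fin n → ZMod q) :
    ind p x = if x ∈ Subcube p then 1 else 0 := by
  by_cases h : x ∈ Subcube p
  · rw [if_pos h]
    refine Finset.prod_eq_one fun j _ => ?_
    unfold chi
    cases hj : p j with
    | some a => simp [h j a hj]
    | none => rfl
  · rw [if_neg h]
    simp only [Subcube, Set.mem_setOf_eq, not_forall] at h
    obtain ⟨c, a, hc, hne⟩ := h
    refine Finset.prod_eq_zero (Finset.mem_univ c) ?_
    unfold chi
    rw [hc]
    simp [hne]

lemma sum_ind_one (M : Fin K → Fin n → Option (ZMod q)) (hP : IsPartitionMatrix q M)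
    (x : Fin n → ZMod q) : ∑ r, ind (M r) x = 1 := by
  classical
  obtain ⟨r0, hr0⟩ := hP.2 x
  rw [Finset.sum_eq_single r0]
  · rw [ind_eq, if_pos hr0]
  · intro r _ hne
    rw [ind_eq, if_neg]
    intro hmem
    have := hP.1 r r0 hne
    exact absurd (Set.mem_inter hmem hr0) (by rw [this]; exact Set.notMem_empty x)
  · intro h; exact absurd (Finset.mem_univ r0) h

lemma vol_pos (p : Fin n → Option (ZMod q)) : 1 ≤ Vol p := by
  have hwgt : ∀ j : Fin n, (1:ℚ) ≤ wgt p j := by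
    intro j
    cases h : p j with
    | some a => rw [wgt_some h]
    | none =>
      rw [wgt_none h]
      have : 1 ≤ q := Nat.one_le_iff_ne_zero.2 (NeZero.ne q)
      exact_mod_cast this
  have := Finset.prod_le_prod (s := (univ : Finset (Fin n)))
    (f := fun _ : Fin n => (1:ℚ)) (g := wgt p)
    (fun j _ => by norm_num) (fun j _ => hwgt j)
  unfold Vol
  simpa using this

lemma sum_vol (M : Fin K → Fin n → Option (ZMod q)) (hP : IsPartitionMatrix q M) :
    ∑ r, Vol (M r) = (q : ℚ)^n := by
  calc ∑ r, Vol (M r) = ∑ r, ∑ x : Fin n → ZMod q, ind (M r) x :=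
        Finset.sum_congr rfl fun r _ => (sum_ind (M r)).symm
    _ = ∑ x : Fin n → ZMod q, ∑ r, ind (M r) x := Finset.sum_comm
    _ = ∑ x : Fin n → ZMod q, 1 := Finset.sum_congr rfl fun x _ => sum_ind_one M hP x
    _ = (q:ℚ)^n := by
        rw [Finset.sum_const, Finset.card_univ, nsmul_eq_mul, mul_one]
        have : Fintype.card (Fin n → ZMod q) = q ^ n := by
          simp [ZMod.card]
        rw [this]
        push_cast
        ring

lemma rigidity (M : Fin K → Fin n → Option (ZMod q)) (hP : IsPartitionMatrix q M)
    (hA : APrimitive M) (F : Fin n → ZMod q → ℚ) (hF : ∀ c, ∑ b, F c b = 0) (c0 : ℚ)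
    (hrel : ∀ r, c0 + Etot F (M r) = 0) :
    c0 = 0 ∧ ∀ c, sg F c = 0 := by
  classical
  set p0 : Fin n → Option (ZMod q) := fun _ => none with hp0
  have hind0 : ∀ x : Fin n → ZMod q, ind p0 x = 1 := fun x =>
    Finset.prod_eq_one fun j _ => rfl
  have hvol0 : Vol p0 = (q:ℚ)^n := by
    unfold Vol
    calc ∏ j : Fin n, wgt p0 j = ∏ j : Fin n, (q:ℚ) :=
          Finset.prod_congr rfl fun j _ => rfl
      _ = (q:ℚ)^n := by simp
  have hE0 : Etot F p0 = 0 := by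
    unfold Etot
    exact Finset.sum_eq_zero fun c _ => ev_none hF rfl
  -- global identity
  have hglob := SUMH2 hF p0 c0
  simp only [hind0, one_mul, hvol0, hE0, add_zero, if_true] at hglob
  have hglob2 : (q:ℚ) * ∑ x : Fin n → ZMod q, (c0 + ∑ c, F c (x c))^2
      = (q:ℚ)^(n+1) * c0^2 + (q:ℚ)^n * ∑ c, sg F c := by
    rw [hglob]
    have hif : ∀ x, (if p0 x = none then sg F x * (q:ℚ)^n else 0) = sg F x * (q:ℚ)^n :=
      fun x => if_pos rfl
    simp only [hif]
    rw [← Finset.sum_mul]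
    ring
  -- row-wise identity
  have hrows : (q:ℚ) * ∑ x : Fin n → ZMod q, (c0 + ∑ c, F c (x c))^2
      = ∑ c, sg F c * (∑ r, if M r c = none then Vol (M r) else 0) := by
    have e1 : ∀ x : Fin n → ZMod q, (c0 + ∑ c, F c (x c))^2
        = ∑ r, ind (M r) x * (c0 + ∑ c, F c (x c))^2 := by
      intro x
      rw [← Finset.sum_mul, sum_ind_one M hP x, one_mul]
    calc (q:ℚ) * ∑ x : Fin n → ZMod q, (c0 + ∑ c, F c (x c))^2
        = ∑ r, (q:ℚ) * ∑ x : Fin n → ZMod q, ind (M r) x * (c0 + ∑ c, F c (x c))^2 := by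
          rw [Finset.sum_congr rfl fun x (_ : x ∈ univ) => e1 x, Finset.sum_comm,
            Finset.mul_sum]
      _ = ∑ r, ((q:ℚ) * (Vol (M r) * (c0 + Etot F (M r))^2)
            + ∑ c, (if M r c = none then sg F c * Vol (M r) else 0)) :=
          Finset.sum_congr rfl fun r _ => SUMH2 hF (M r) c0
      _ = ∑ r, ∑ c, (if M r c = none then sg F c * Vol (M r) else 0) := by
          refine Finset.sum_congr rfl fun r _ => ?_
          rw [hrel r]
          ring
      _ = ∑ c, ∑ r, (if M r c = none then sg F c * Vol (M r) else 0) := Finset.sum_comm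
      _ = ∑ c, sg F c * (∑ r, if M r c = none then Vol (M r) else 0) := by
          refine Finset.sum_congr rfl fun c _ => ?_
          rw [Finset.mul_sum]
          exact Finset.sum_congr rfl fun r _ => by split <;> simp
  -- bound the weights
  have hW : ∀ c, (∑ r, if M r c = none then Vol (M r) else 0) ≤ (q:ℚ)^n - 1 := by
    intro c
    obtain ⟨r1, h1⟩ := hA c
    have hnone : ¬ (M r1 c = none) := by
      intro h; rw [h] at h1; simp at h1
    calc (∑ r, if M r c = none then Vol (M r) else 0)
        = (if M r1 c = none then Vol (M r1) else 0)
          + ∑ r ∈ univ.erase r1, (if M r c = none then Vol (M r) else 0) :=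
          (Finset.add_sum_erase univ _ (Finset.mem_univ r1)).symm
      _ = ∑ r ∈ univ.erase r1, (if M r c = none then Vol (M r) else 0) := by
          rw [if_neg hnone, zero_add]
      _ ≤ ∑ r ∈ univ.erase r1, Vol (M r) := by
          refine Finset.sum_le_sum fun r _ => ?_
          split
          · exact le_refl _
          · linarith [vol_pos (M r)]
      _ = (∑ r, Vol (M r)) - Vol (M r1) := Finset.sum_erase_eq_sub (Finset.mem_univ r1)
      _ ≤ (q:ℚ)^n - 1 := by
          rw [sum_vol M hP]
          linarith [vol_pos (M r1)]
  have hsg : ∀ c, 0 ≤ sg F c := fun c => Finset.sum_nonneg fun b _ => sq_nonneg _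
  have hfinal : (q:ℚ)^(n+1) * c0^2 + ∑ c, sg F c ≤ 0 := by
    have h1 : (q:ℚ)^(n+1) * c0^2 + (q:ℚ)^n * ∑ c, sg F c
        ≤ ∑ c, sg F c * ((q:ℚ)^n - 1) := by
      rw [← hglob2, hrows]
      exact Finset.sum_le_sum fun c _ => mul_le_mul_of_nonneg_left (hW c) (hsg c)
    have h2 : ∑ c, sg F c * ((q:ℚ)^n - 1) = (q:ℚ)^n * (∑ c, sg F c) - ∑ c, sg F c := by
      rw [← Finset.sum_mul]
      ring
    linarith [h1, h2.le, h2.ge]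
  have hq1 : (0:ℚ) < (q:ℚ)^(n+1) := by
    have : (0:ℚ) < (q:ℚ) := by
      have := Nat.pos_of_ne_zero (NeZero.ne q)
      exact_mod_cast this
    positivity
  have hsum0 : ∑ c, sg F c = 0 := by
    have := Finset.sum_nonneg (fun c (_ : c ∈ univ) => hsg c)
    nlinarith [sq_nonneg c0]
  constructor
  · have hc2 : c0^2 = 0 := by nlinarith [sq_nonneg c0]
    exact (pow_eq_zero_iff (two_ne_zero)).1 hc2
  · intro c
    have := (Finset.sum_eq_zero_iff_of_nonneg (fun c (_ : c ∈ univ) => hsg c)).1 hsum0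
    exact this c (Finset.mem_univ c)

end Upper5

section Upper6

theorem upper_bound {q n K : ℕ} (hq : 2 ≤ q) (M : Fin K → Fin n → Option (ZMod q))
    (hP : IsPartitionMatrix q M) (hA : APrimitive M) : n * (q - 1) + 1 ≤ K := by
  haveI : NeZero q := ⟨by omega⟩
  classical
  let v : Option (Fin n × {a : ZMod q // a ≠ 0}) → (Fin K → ℚ) := fun i =>
    match i with
    | none => fun _ => 1
    | some (c, a) => fun r =>
        (if M r c = some a.1 then 1 else 0) - (if M r c = some 0 then 1 else 0)
  have hli : LinearIndependent ℚ v := by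
    rw [Fintype.linearIndependent_iff]
    intro g hg
    set F : Fin n → ZMod q → ℚ := fun c b =>
      ∑ a : {a : ZMod q // a ≠ 0}, g (some (c, a)) *
        ((if b = a.1 then 1 else 0) - (if b = 0 then 1 else 0)) with hFdef
    have hF : ∀ c, ∑ b, F c b = 0 := by
      intro c
      rw [Finset.sum_comm]
      refine Finset.sum_eq_zero fun a _ => ?_
      rw [← Finset.mul_sum]
      have hz : ∑ b : ZMod q,
          ((if b = a.1 then (1:ℚ) else 0) - (if b = 0 then 1 else 0)) = 0 := by
        rw [Finset.sum_sub_distrib, Finset.sum_ite_eq', Finset.sum_ite_eq']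
        simp
      rw [hz, mul_zero]
    have hrow : ∀ r, g none + Etot F (M r) = 0 := by
      intro r
      have h0 := congrFun hg r
      rw [Finset.sum_apply] at h0
      simp only [Pi.smul_apply, smul_eq_mul] at h0
      rw [Fintype.sum_option] at h0
      rw [Fintype.sum_prod_type] at h0
      have hterm : ∀ c : Fin n,
          (∑ a : {a : ZMod q // a ≠ 0}, g (some (c, a)) * v (some (c, a)) r)
            = ev F (M r) c := by
        intro c
        cases h : M r c with
        | some d =>
          rw [ev_some h]
          simp only [hFdef]
          refine Finset.sum_congr rfl fun a _ => ?_
          show g (some (c,a)) * ((if M r c = some a.1 then (1:ℚ) else 0)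
              - (if M r c = some 0 then 1 else 0)) = _
          rw [h]
          simp only [Option.some.injEq]
        | none =>
          rw [ev_none hF h]
          refine Finset.sum_eq_zero fun a _ => ?_
          show g (some (c,a)) * ((if M r c = some a.1 then (1:ℚ) else 0)
              - (if M r c = some 0 then 1 else 0)) = 0
          rw [h]
          simp
      rw [Finset.sum_congr rfl fun c (_ : c ∈ univ) => hterm c] at h0
      have : g none * v none r = g none := by simp only [v]; ring
      rw [this] at h0
      exact h0
    obtain ⟨hc0, hsg⟩ := rigidity M hP hA F hF (g none) hrow
    have hFzero : ∀ c b, F c b = 0 := by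
      intro c b
      have h1 := hsg c
      unfold sg at h1
      have h2 := (Finset.sum_eq_zero_iff_of_nonneg
        (fun b (_ : b ∈ univ) => sq_nonneg (F c b))).1 h1 b (Finset.mem_univ b)
      exact pow_eq_zero_iff two_ne_zero |>.1 h2
    intro i
    match i with
    | none => exact hc0
    | some (c, a) =>
      have hFa : F c a.1 = g (some (c, a)) := by
        simp only [hFdef]
        have e1 : ∀ a' : {a : ZMod q // a ≠ 0},
            g (some (c, a')) * ((if (a.1 : ZMod q) = a'.1 then (1:ℚ) else 0)
              - (if (a.1 : ZMod q) = 0 then 1 else 0))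
            = if a' = a then g (some (c, a')) else 0 := by
          intro a'
          rw [if_neg a.2]
          by_cases h : a' = a
          · subst h; simp
          · rw [if_neg (fun hh => h (Subtype.ext hh.symm)), if_neg h]; ring
        rw [Finset.sum_congr rfl fun a' _ => e1 a', Finset.sum_ite_eq']
        simp
      rw [← hFa]
      exact hFzero c a.1
  have hcard := hli.fintype_card_le_finrank
  rw [Module.finrank_pi] at hcard
  rw [Fintype.card_option, Fintype.card_prod, Fintype.card_fin, Fintype.card_fin] at hcard
  have hsub : Fintype.card {a : ZMod q // a ≠ 0} = q - 1 := by
    rw [Fintype.card_subtype_compl, ZMod.card, Fintype.card_subtype_eq]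
  rw [hsub] at hcard
  omega

end Upper6


open Finset

section Exist

variable (q m : ℕ)

abbrev Col := Σ d : Fin m, (Fin (d : ℕ) → ZMod q)

variable {q m}

def pre (v : Fin m → ZMod q) (d : Fin m) : Fin (d : ℕ) → ZMod q :=
  fun i => v ⟨i.1, i.2.trans d.2⟩

def Pat (v : Fin m → ZMod q) : Col q m → Option (ZMod q) :=
  fun c => if pre v c.1 = c.2 then some (v c.1) else none

lemma mem_pat_iff (v : Fin m → ZMod q) (x : Col q m → ZMod q) :
    x ∈ Subcube (Pat v) ↔ ∀ d : Fin m, x ⟨d, pre v d⟩ = v d := by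
  constructor
  · intro h d
    exact h ⟨d, pre v d⟩ (v d) (by unfold Pat; simp)
  · intro h c a hc
    unfold Pat at hc
    split at hc
    · next heq =>
      obtain ⟨d, w⟩ := c
      dsimp at heq
      subst heq
      have := h d
      rw [this]
      exact (Option.some_inj.1 hc)
    · exact absurd hc (by simp)

def dec (x : Col q m → ZMod q) : (d : ℕ) → d < m → ZMod q
  | d, hd => x ⟨⟨d, hd⟩, fun i => dec x i.1 (i.2.trans hd)⟩
  termination_by d _ => d

def decode (x : Col q m → ZMod q) : Fin m → ZMod q := fun d => dec x d.1 d.2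

lemma decode_mem (x : Col q m → ZMod q) : x ∈ Subcube (Pat (decode x)) := by
  rw [mem_pat_iff]
  intro d
  show x ⟨d, pre (decode x) d⟩ = dec x d.1 d.2
  rw [dec]
  rfl

lemma pat_unique {v v' : Fin m → ZMod q} (x : Col q m → ZMod q)
    (hx : x ∈ Subcube (Pat v)) (hx' : x ∈ Subcube (Pat v')) : v = v' := by
  rw [mem_pat_iff] at hx hx'
  by_contra hne
  have hS : ∃ k : ℕ, ∃ hk : k < m, v ⟨k, hk⟩ ≠ v' ⟨k, hk⟩ := by
    by_contra hall
    push_neg at hall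
    exact hne (funext fun d => hall d.1 d.2)
  classical
  obtain ⟨hk, hkne⟩ := Nat.find_spec hS
  have hmin : ∀ j < Nat.find hS, ∀ hj : j < m, v ⟨j, hj⟩ = v' ⟨j, hj⟩ := by
    intro j hj hjm
    by_contra hc
    exact Nat.find_min hS hj ⟨hjm, hc⟩
  set d : Fin m := ⟨Nat.find hS, hk⟩ with hd
  have hpre : pre v d = pre v' d := by
    funext i
    exact hmin i.1 i.2 _
  have h1 := hx d
  have h2 := hx' d
  rw [hpre] at h1
  rw [h1] at h2
  exact hkne h2

lemma pat_isSome_iff (v : Fin m → ZMod q) (c : Col q m) :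
    (Pat v c).isSome ↔ pre v c.1 = c.2 := by
  unfold Pat
  split <;> simp_all

lemma numCount_pat (v : Fin m → ZMod q) : numCount (Pat v) = m := by
  classical
  have e : {c : Col q m // (Pat v c).isSome} ≃ Fin m :=
    { toFun := fun s => s.1.1
      invFun := fun d => ⟨⟨d, pre v d⟩, by rw [pat_isSome_iff]⟩
      left_inv := by
        rintro ⟨⟨d, w⟩, h⟩
        rw [pat_isSome_iff] at h
        dsimp at h
        subst h
        rfl
      right_inv := fun d => rfl }
  rw [numCount, Nat.card_congr e, Nat.card_eq_fintype_card, Fintype.card_fin]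

end Exist

section Exist2
variable {q m : ℕ}

lemma pat_primitive (c : Col q m) : ∃ v : Fin m → ZMod q, (Pat v c).isSome := by
  classical
  refine ⟨fun i => if h : i.1 < c.1.1 then c.2 ⟨i.1, h⟩ else 0, ?_⟩
  rw [pat_isSome_iff]
  funext i
  unfold pre
  simp [i.2]

lemma geom_sum_nat (q m : ℕ) (hq : 1 ≤ q) :
    (q - 1) * ∑ i ∈ Finset.range m, q ^ i = q ^ m - 1 := by
  induction m with
  | zero => simp
  | succ k ih =>
    rw [Finset.sum_range_succ, Nat.mul_add, ih, pow_succ]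
    have h1 : 1 ≤ q ^ k := Nat.one_le_pow _ _ (by omega)
    have h3 : (q - 1) * q ^ k = q * q ^ k - q ^ k := by
      rw [Nat.sub_mul, one_mul]
    have h2 : q ^ k ≤ q * q ^ k := by
      calc q ^ k = 1 * q ^ k := (one_mul _).symm
        _ ≤ q * q ^ k := Nat.mul_le_mul_right _ (by omega)
    have h4 : q ^ k * q = q * q ^ k := mul_comm _ _
    rw [h3]
    omega

lemma card_col (hq : 2 ≤ q) [NeZero q] :
    Fintype.card (Col q m) = (q ^ m - 1) / (q - 1) := by
  classical
  rw [Fintype.card_sigma]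
  have h1 : ∀ d : Fin m, Fintype.card (Fin (d:ℕ) → ZMod q) = q ^ (d:ℕ) := by
    intro d
    simp [ZMod.card]
  rw [Finset.sum_congr rfl fun d _ => h1 d]
  rw [Fin.sum_univ_eq_sum_range (fun i => q ^ i) m]
  rw [← geom_sum_nat q m (by omega)]
  exact (Nat.mul_div_cancel_left _ (by omega)).symm

end Exist2

section Exist3
variable {q m : ℕ}

lemma mem_transport {N : ℕ} (eC : Col q m ≃ Fin N) (p : Col q m → Option (ZMod q))
    (x : Fin N → ZMod q) :
    x ∈ Subcube (fun c => p (eC.symm c)) ↔ (fun col => x (eC col)) ∈ Subcube p := by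
  constructor
  · intro h col a hcol
    have := h (eC col) a (by simpa using hcol)
    exact this
  · intro h c a hc
    have := h (eC.symm c) a hc
    simpa using this

theorem existence (q m : ℕ) (hq : 2 ≤ q) :
    ∃ M : Fin (q ^ m) → Fin ((q ^ m - 1) / (q - 1)) → Option (ZMod q),
      IsPartitionMatrix q M ∧ (∀ r, numCount (M r) = m) ∧ APrimitive M := by
  haveI : NeZero q := ⟨by omega⟩
  classical
  have hcR : Fintype.card (Fin m → ZMod q) = q ^ m := by simp [ZMod.card]
  have hcC : Fintype.card (Col q m) = (q ^ m - 1) / (q - 1) := card_col hq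
  let eR := Fintype.equivFinOfCardEq hcR
  let eC := Fintype.equivFinOfCardEq hcC
  refine ⟨fun r c => Pat (eR.symm r) (eC.symm c), ⟨?_, ?_⟩, ?_, ?_⟩
  · intro r r' hne
    apply Set.eq_empty_iff_forall_notMem.2
    intro x hx
    have h1 := (mem_transport eC _ x).1 hx.1
    have h2 := (mem_transport eC _ x).1 hx.2
    have heq := pat_unique _ h1 h2
    exact hne (eR.symm.injective heq)
  · intro x
    refine ⟨eR (decode (fun col => x (eC col))), ?_⟩
    have hmem := (mem_transport eC (Pat (decode fun col => x (eC col))) x).2 (decode_mem _)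
    show x ∈ Subcube fun c => Pat (eR.symm (eR (decode fun col => x (eC col)))) (eC.symm c)
    simp only [Equiv.symm_apply_apply]
    exact hmem
  · intro r
    show Nat.card {c // (Pat (eR.symm r) (eC.symm c)).isSome} = m
    have e2 : {c // (Pat (eR.symm r) (eC.symm c)).isSome}
        ≃ {col // (Pat (eR.symm r) col).isSome} :=
      Equiv.subtypeEquiv eC.symm (fun c => Iff.rfl)
    rw [Nat.card_congr e2]
    exact numCount_pat (eR.symm r)
  · intro c
    obtain ⟨v, hv⟩ := pat_primitive (eC.symm c)
    exact ⟨eR v, by simpa using hv⟩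

end Exist3


end Stmt17Aux

/-- For fixed `q ≥ 2` and `m`, the maximal `n` admitting an A-primitive partition of
`Z_q^n` into `q^m` subcubes of dimension `n - m` is `N = (q^m - 1)/(q - 1)`: such a
partition exists for `n = N` and none exists for `n > N`. -/
theorem stmt17 (q m : ℕ) (hq : 2 ≤ q) :
    (∃ M : Fin (q ^ m) → Fin ((q ^ m - 1) / (q - 1)) → Option (ZMod q),
      IsPartitionMatrix q M ∧ (∀ r, numCount (M r) = m) ∧ APrimitive M) ∧
    (∀ n : ℕ, (q ^ m - 1) / (q - 1) < n →
      ¬∃ M : Fin (q ^ m) → Fin n → Option (ZMod q),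
        IsPartitionMatrix q M ∧ (∀ r, numCount (M r) = m) ∧ APrimitive M) := by
  constructor
  · exact Stmt17Aux.existence q m hq
  · intro n hn h
    obtain ⟨M, hP, hnum, hA⟩ := h
    have hub := Stmt17Aux.upper_bound hq M hP hA
    have hgeom := Stmt17Aux.geom_sum_nat q m (by omega)
    set S := ∑ i ∈ Finset.range m, q ^ i with hS
    have hN : (q ^ m - 1) / (q - 1) = S := by
      rw [← hgeom]
      exact Nat.mul_div_cancel_left _ (by omega)
    rw [hN] at hn
    have h3 : 1 ≤ q ^ m := Nat.one_le_pow _ _ (by omega)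
    have h1 : (S + 1) * (q - 1) ≤ n * (q - 1) :=
      Nat.mul_le_mul_right _ (by omega)
    have h2 : (S + 1) * (q - 1) = (q ^ m - 1) + (q - 1) := by
      rw [add_mul, one_mul, mul_comm S (q - 1), hgeom]
    have c1 : q ^ m ≤ n * (q - 1) := by
      calc q ^ m = (q ^ m - 1) + 1 := by omega
        _ ≤ (q ^ m - 1) + (q - 1) := Nat.add_le_add_left (by omega) _
        _ = (S + 1) * (q - 1) := h2.symm
        _ ≤ n * (q - 1) := h1
    exact absurd (lt_of_lt_of_le (Nat.lt_of_succ_le hub) c1) (lt_irrefl _)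
end
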